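/- Any pure O-sequence (h_0, h_1, ..., h_d) with h_d ≠ 0 satisfies h_0 ≤ h_1 ≤ ... ≤ h_{⌊d/2⌋} and h_i ≤ h_{d-i} for all 0 ≤ i ≤ ⌊d/2⌋. -/

import Mathlib

open Finset

/-- The degree of a monomial, encoded as a finitely supported exponent vector. -/
def mdeg (m : ℕ →₀ ℕ) : ℕ := m.sum fun _ e => e

/-- An order ideal: a set of monomials closed under divisibility. -/
def IsOrderIdeal (O : Set (ℕ →₀ ℕ)) : Prop := ∀ m ∈ O, ∀ n : ℕ →₀ ℕ, n ≤ m → n ∈ O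

/-- `h` is a pure `O`-sequence: it is the degree-count vector of a finite nonempty
order ideal all of whose maximal monomials have the same degree. -/
def IsPureOSeq (h : ℕ → ℤ) : Prop :=
  ∃ O : Set (ℕ →₀ ℕ), O.Finite ∧ O.Nonempty ∧ IsOrderIdeal O ∧
    (∃ D : ℕ, ∀ m ∈ O, (∀ n ∈ O, m ≤ n → n = m) → mdeg m = D) ∧
    ∀ i : ℕ, h i = ({m ∈ O | mdeg m = i}).ncard

lemma mdeg_add (u v : ℕ →₀ ℕ) : mdeg (u + v) = mdeg u + mdeg v := by
  simp [mdeg, Finsupp.sum_add_index']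

lemma mdeg_single (a y : ℕ) : mdeg (Finsupp.single a y) = y := by
  simp [mdeg, Finsupp.sum_single_index]

lemma mdeg_mono {u v : ℕ →₀ ℕ} (h : u ≤ v) : mdeg u ≤ mdeg v := by
  obtain ⟨w, rfl⟩ := exists_add_of_le h
  simp [mdeg_add]

lemma mdeg_eq_zero {u : ℕ →₀ ℕ} (h : mdeg u = 0) : u = 0 := by
  ext x
  by_cases hx : x ∈ u.support
  · have : u x ≤ mdeg u := by
      rw [mdeg, Finsupp.sum]
      exact Finset.single_le_sum (fun i _ => Nat.zero_le (u i)) hx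
    simp only [Finsupp.coe_zero, Pi.zero_apply]; omega
  · simpa using Finsupp.notMem_support_iff.mp hx

lemma eq_of_le_of_mdeg_le {u v : ℕ →₀ ℕ} (h : u ≤ v) (h2 : mdeg v ≤ mdeg u) : u = v := by
  obtain ⟨w, rfl⟩ := exists_add_of_le h
  have : mdeg w = 0 := by have := mdeg_add u w; omega
  simp [mdeg_eq_zero this]

lemma le_single_add {v b : ℕ} {f n : ℕ →₀ ℕ} (hv : f v = 0) :
    n ≤ Finsupp.single v b + f ↔
      n v ≤ b ∧ n.erase v ≤ f ∧ n = n.erase v + Finsupp.single v (n v) := by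
  constructor
  · intro h
    have hvle : n v ≤ b := by
      have := Finsupp.le_def.mp h v
      simpa [hv] using this
    refine ⟨hvle, ?_, ?_⟩
    · rw [Finsupp.le_def]
      intro i
      by_cases hiv : i = v
      · simp [hiv, Finsupp.erase_same]
      · have := Finsupp.le_def.mp h i
        simpa [Finsupp.erase_ne hiv, Finsupp.single_apply, Ne.symm hiv, hiv] using this
    · rw [add_comm, Finsupp.single_add_erase]
  · rintro ⟨h1, h2, h3⟩
    calc n = n.erase v + Finsupp.single v (n v) := h3
    _ ≤ f + Finsupp.single v b := add_le_add h2 (Finsupp.single_le_single.mpr h1)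
    _ = Finsupp.single v b + f := add_comm _ _

theorem exists_scd (M : ℕ →₀ ℕ) : ∃ (N : ℕ) (g : ℕ → ℕ → (ℕ →₀ ℕ)) (a : ℕ → ℕ) (L : ℕ → ℕ),
    (∀ p k, p < N → k < L p → g p k ≤ M ∧ mdeg (g p k) = a p + k) ∧
    (∀ p k k', p < N → k ≤ k' → k' < L p → g p k ≤ g p k') ∧
    (∀ p, p < N → L p ≠ 0 → 2 * a p + L p = mdeg M + 1) ∧
    (∀ n, n ≤ M → ∃! q : ℕ × ℕ, q.1 < N ∧ q.2 < L q.1 ∧ g q.1 q.2 = n) := by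
  induction M using Finsupp.induction with
  | zero =>
    refine ⟨1, fun _ _ => 0, fun _ => 0, fun _ => 1, ?_, ?_, ?_, ?_⟩
    · intro p k hp hk
      interval_cases k
      simp [mdeg]
    · intro p k k' hp hkk hk'
      exact le_rfl
    · intro p hp _
      simp [mdeg]
    · intro n hn
      have hn0 : n = 0 := le_antisymm hn (zero_le)
      refine ⟨(0, 0), ⟨Nat.zero_lt_one, Nat.zero_lt_one, hn0.symm⟩, ?_⟩
      rintro ⟨p, k⟩ ⟨hp, hk, _⟩
      have hp' : p < 1 := hp
      have hk' : k < 1 := hk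
      simp only [Prod.mk.injEq]
      omega
  | single_add v b f hvf hb ih =>
    obtain ⟨N, g, a, L, hgood, hmono, hsym, hcover⟩ := ih
    have hfv : f v = 0 := Finsupp.notMem_support_iff.mp hvf
    -- decode
    set dec1 : ℕ → ℕ := fun q => q / (b + 1) with hdec1
    set dec2 : ℕ → ℕ := fun q => q % (b + 1) with hdec2
    set L' : ℕ → ℕ := fun q =>
      if dec1 q < N ∧ dec2 q + 1 ≤ L (dec1 q) then (b - dec2 q) + (L (dec1 q) - 1 - dec2 q) + 1
      else 0 with hL'
    set a' : ℕ → ℕ := fun q => a (dec1 q) + dec2 q with ha'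
    set g' : ℕ → ℕ → (ℕ →₀ ℕ) := fun q k =>
      if k ≤ b - dec2 q then g (dec1 q) (dec2 q) + Finsupp.single v k
      else g (dec1 q) (dec2 q + k - (b - dec2 q)) + Finsupp.single v (b - dec2 q) with hg'
    have hdecle : ∀ q, dec2 q ≤ b := fun q => Nat.lt_succ_iff.mp (Nat.mod_lt _ (Nat.succ_pos b))
    have hMdeg : mdeg (Finsupp.single v b + f) = mdeg f + b := by
      rw [mdeg_add, mdeg_single]; ring
    refine ⟨N * (b + 1), g', a', L', ?_, ?_, ?_, ?_⟩
    · -- elements ≤ M and rank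
      intro q k hq hk
      simp only [hL'] at hk
      split_ifs at hk with hcond
      · obtain ⟨hp, ht⟩ := hcond
        have htb : dec2 q ≤ b := hdecle q
        by_cases hcase : k ≤ b - dec2 q
        · have hgpt := hgood (dec1 q) (dec2 q) hp (by omega)
          constructor
          · simp only [hg', if_pos hcase]
            exact le_trans (add_le_add hgpt.1 (Finsupp.single_le_single.mpr (by omega)))
              (le_of_eq (add_comm _ _))
          · simp only [hg', if_pos hcase, mdeg_add, mdeg_single, hgpt.2, ha']
        · have hidx : dec2 q + k - (b - dec2 q) < L (dec1 q) := by omega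
          have hgpx := hgood (dec1 q) (dec2 q + k - (b - dec2 q)) hp hidx
          constructor
          · simp only [hg', if_neg hcase]
            exact le_trans (add_le_add hgpx.1 (Finsupp.single_le_single.mpr (by omega)))
              (le_of_eq (add_comm _ _))
          · simp only [hg', if_neg hcase, mdeg_add, mdeg_single, hgpx.2, ha']
            omega
      · omega
    · -- monotone
      intro q k k' hq hkk hk'
      simp only [hL'] at hk'
      split_ifs at hk' with hcond
      · obtain ⟨hp, ht⟩ := hcond
        have htb : dec2 q ≤ b := hdecle q
        by_cases hc1 : k ≤ b - dec2 q <;> by_cases hc2 : k' ≤ b - dec2 q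
        · simp only [hg', if_pos hc1, if_pos hc2]
          exact add_le_add le_rfl (Finsupp.single_le_single.mpr hkk)
        · simp only [hg', if_pos hc1, if_neg hc2]
          exact add_le_add (hmono (dec1 q) (dec2 q) (dec2 q + k' - (b - dec2 q)) hp (by omega) (by omega))
            (Finsupp.single_le_single.mpr (by omega))
        · omega
        · simp only [hg', if_neg hc1, if_neg hc2]
          exact add_le_add (hmono (dec1 q) _ _ hp (by omega) (by omega)) le_rfl
      · omega
    · -- symmetric
      intro q hq hLq
      simp only [hL'] at hLq ⊢
      split_ifs at hLq with hcond
      · obtain ⟨hp, ht⟩ := hcond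
        rw [if_pos ⟨hp, ht⟩]
        have := hsym (dec1 q) hp (by omega)
        have htb : dec2 q ≤ b := hdecle q
        simp only [ha', hMdeg]
        omega
      · omega
    · -- cover
      intro n hn
      obtain ⟨hy, hm, hrep⟩ := (le_single_add hfv).mp hn
      set y := n v with hyv
      set m := n.erase v with hmv
      clear_value y m
      obtain ⟨⟨p, k₀⟩, ⟨hp, hk₀, hgm⟩, huniq⟩ := hcover m hm
      replace hp : p < N := hp
      replace hk₀ : k₀ < L p := hk₀
      replace hgm : g p k₀ = m := hgm
      have key : ∀ q k, q < N * (b + 1) → k < L' q → g' q k = n →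
          (dec1 q = p ∧
            ((k ≤ b - dec2 q ∧ dec2 q = k₀ ∧ k = y) ∨
             (¬ (k ≤ b - dec2 q) ∧ dec2 q = b - y ∧ dec2 q + k - (b - dec2 q) = k₀))) := by
        intro q k hqN hk hgk
        simp only [hL'] at hk
        split_ifs at hk with hcond
        · obtain ⟨hp', ht'⟩ := hcond
          have htb : dec2 q ≤ b := hdecle q
          by_cases hcase : k ≤ b - dec2 q
          · simp only [hg', if_pos hcase] at hgk
            have hgval : (g (dec1 q) (dec2 q)) v = 0 := by
              have := Finsupp.le_def.mp (hgood (dec1 q) (dec2 q) hp' (by omega)).1 v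
              omega
            have hyk : k = y := by
              have := congrArg (fun z => z v) hgk
              simpa [hgval, Finsupp.single_apply, ← hyv] using this
            have hme : g (dec1 q) (dec2 q) = m := by
              have := congrArg (Finsupp.erase v) hgk
              rwa [Finsupp.erase_add, Finsupp.erase_single, add_zero,
                Finsupp.erase_of_notMem_support (Finsupp.notMem_support_iff.mpr hgval),
                ← hmv] at this
            have := huniq (dec1 q, dec2 q) ⟨hp', show dec2 q < L (dec1 q) by omega, hme⟩
            simp only [Prod.mk.injEq] at this
            exact ⟨this.1, Or.inl ⟨hcase, this.2, hyk⟩⟩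
          · simp only [hg', if_neg hcase] at hgk
            have hidx : dec2 q + k - (b - dec2 q) < L (dec1 q) := by omega
            have hgval : (g (dec1 q) (dec2 q + k - (b - dec2 q))) v = 0 := by
              have := Finsupp.le_def.mp (hgood (dec1 q) _ hp' hidx).1 v
              omega
            have hyk : b - dec2 q = y := by
              have := congrArg (fun z => z v) hgk
              simpa [hgval, Finsupp.single_apply, ← hyv] using this
            have hme : g (dec1 q) (dec2 q + k - (b - dec2 q)) = m := by
              have := congrArg (Finsupp.erase v) hgk
              rwa [Finsupp.erase_add, Finsupp.erase_single, add_zero,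
                Finsupp.erase_of_notMem_support (Finsupp.notMem_support_iff.mpr hgval),
                ← hmv] at this
            have := huniq (dec1 q, dec2 q + k - (b - dec2 q)) ⟨hp', show dec2 q + k - (b - dec2 q) < L (dec1 q) from hidx, hme⟩
            simp only [Prod.mk.injEq] at this
            exact ⟨this.1, Or.inr ⟨hcase, by omega, this.2⟩⟩
        · omega
      -- encode/decode helpers
      have henc1 : ∀ (p' t : ℕ), t ≤ b → dec1 (p' * (b + 1) + t) = p' := by
        intro p' t ht
        simp only [hdec1]
        have h2 : p' * (b + 1) + t = (b + 1) * p' + t := by ring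
        rw [h2, Nat.mul_add_div (Nat.succ_pos b), Nat.div_eq_of_lt (by omega), add_zero]
      have henc2 : ∀ (p' t : ℕ), t ≤ b → dec2 (p' * (b + 1) + t) = t := by
        intro p' t ht
        simp only [hdec2]
        have h2 : p' * (b + 1) + t = (b + 1) * p' + t := by ring
        rw [h2, Nat.mul_add_mod, Nat.mod_eq_of_lt (by omega)]
      have hqlt : ∀ (t : ℕ), t ≤ b → p * (b + 1) + t < N * (b + 1) := by
        intro t ht
        calc p * (b + 1) + t < (p + 1) * (b + 1) := by ring_nf; omega
        _ ≤ N * (b + 1) := Nat.mul_le_mul_right _ (by omega)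
      have hdecrec : ∀ q' : ℕ, q' = dec1 q' * (b + 1) + dec2 q' := by
        intro q'
        simp only [hdec1, hdec2]
        rw [mul_comm]
        exact (Nat.div_add_mod q' (b + 1)).symm
      have hyb : y ≤ b := hy
      by_cases hcase : k₀ ≤ b - y
      · refine ⟨(p * (b + 1) + k₀, y), ⟨hqlt k₀ (by omega), ?_, ?_⟩, ?_⟩
        · show y < L' (p * (b + 1) + k₀)
          simp only [hL', henc1 p k₀ (by omega), henc2 p k₀ (by omega),
            if_pos (show p < N ∧ k₀ + 1 ≤ L p from ⟨hp, by omega⟩)]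
          omega
        · show g' (p * (b + 1) + k₀) y = n
          simp only [hg', henc1 p k₀ (by omega), henc2 p k₀ (by omega),
            if_pos (show y ≤ b - k₀ by omega)]
          rw [hgm]
          exact hrep.symm
        · rintro ⟨q', k'⟩ ⟨hq', hk', hgk'⟩
          obtain ⟨hd1, hcases⟩ := key q' k' hq' hk' hgk'
          have hd2b := hdecle q'
          simp only [Prod.mk.injEq]
          rcases hcases with ⟨h1, h2, h3⟩ | ⟨h1, h2, h3⟩
          · constructor
            · rw [hdecrec q', hd1, h2]
            · exact h3
          · exfalso
            omega
      · refine ⟨(p * (b + 1) + (b - y), y + (k₀ - (b - y))), ⟨hqlt (b - y) (by omega), ?_, ?_⟩, ?_⟩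
        · show y + (k₀ - (b - y)) < L' (p * (b + 1) + (b - y))
          simp only [hL', henc1 p (b - y) (by omega), henc2 p (b - y) (by omega),
            if_pos (show p < N ∧ (b - y) + 1 ≤ L p from ⟨hp, by omega⟩)]
          omega
        · show g' (p * (b + 1) + (b - y)) (y + (k₀ - (b - y))) = n
          simp only [hg', henc1 p (b - y) (by omega), henc2 p (b - y) (by omega),
            if_neg (show ¬ (y + (k₀ - (b - y)) ≤ b - (b - y)) by omega)]
          have hidx : b - y + (y + (k₀ - (b - y))) - (b - (b - y)) = k₀ := by omega
          have hby : b - (b - y) = y := by omega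
          rw [hidx, hby, hgm]
          exact hrep.symm
        · rintro ⟨q', k'⟩ ⟨hq', hk', hgk'⟩
          obtain ⟨hd1, hcases⟩ := key q' k' hq' hk' hgk'
          have hd2b := hdecle q'
          simp only [Prod.mk.injEq]
          rcases hcases with ⟨h1, h2, h3⟩ | ⟨h1, h2, h3⟩
          · exfalso
            omega
          · constructor
            · rw [hdecrec q', hd1, h2]
            · omega

lemma exists_inj (M : ℕ →₀ ℕ) {i j : ℕ} (hij : i ≤ j) (hj : i + j ≤ mdeg M) :
    ∃ ν : (ℕ →₀ ℕ) → (ℕ →₀ ℕ),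
      (∀ m, m ≤ M → mdeg m = i → ν m ≤ M ∧ mdeg (ν m) = j ∧ m ≤ ν m) ∧
      ∀ m m', m ≤ M → mdeg m = i → m' ≤ M → mdeg m' = i → ν m = ν m' → m = m' := by
  classical
  obtain ⟨N, g, a, L, hgood, hmono, hsym, hcover⟩ := exists_scd M
  have hsel : ∀ m : ℕ →₀ ℕ, m ≤ M → ∃ q : ℕ × ℕ, q.1 < N ∧ q.2 < L q.1 ∧ g q.1 q.2 = m :=
    fun m hm => (hcover m hm).exists
  choose f hf1 hf2 hf3 using hsel
  refine ⟨fun m => if hm : m ≤ M then g (f m hm).1 ((f m hm).2 + (j - i)) else 0, ?_, ?_⟩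
  · intro m hm hdeg
    simp only [dif_pos hm]
    have h1 := hf1 m hm
    have h2 := hf2 m hm
    have h3 := hf3 m hm
    have hrk : a (f m hm).1 + (f m hm).2 = i := by
      have := (hgood _ _ h1 h2).2
      rw [h3, hdeg] at this
      omega
    have hLp := hsym (f m hm).1 h1 (by omega)
    have hpos : (f m hm).2 + (j - i) < L (f m hm).1 := by omega
    refine ⟨(hgood _ _ h1 hpos).1, ?_, ?_⟩
    · rw [(hgood _ _ h1 hpos).2]
      omega
    · have := hmono (f m hm).1 (f m hm).2 ((f m hm).2 + (j - i)) h1 (Nat.le_add_right _ _) hpos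
      rwa [h3] at this
  · intro m m' hm hdm hm' hdm' heq
    simp only [dif_pos hm, dif_pos hm'] at heq
    have h1 := hf1 m hm
    have h2 := hf2 m hm
    have h3 := hf3 m hm
    have h1' := hf1 m' hm'
    have h2' := hf2 m' hm'
    have h3' := hf3 m' hm'
    have hrk : a (f m hm).1 + (f m hm).2 = i := by
      have := (hgood _ _ h1 h2).2
      rw [h3, hdm] at this
      omega
    have hrk' : a (f m' hm').1 + (f m' hm').2 = i := by
      have := (hgood _ _ h1' h2').2
      rw [h3', hdm'] at this
      omega
    have hLp := hsym (f m hm).1 h1 (by omega)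
    have hLp' := hsym (f m' hm').1 h1' (by omega)
    have hpos : (f m hm).2 + (j - i) < L (f m hm).1 := by omega
    have hpos' : (f m' hm').2 + (j - i) < L (f m' hm').1 := by omega
    set n := g (f m hm).1 ((f m hm).2 + (j - i)) with hn
    have hnM : n ≤ M := (hgood _ _ h1 hpos).1
    have e1 := (hcover n hnM).unique
      (y₁ := ((f m hm).1, (f m hm).2 + (j - i)))
      (y₂ := ((f m' hm').1, (f m' hm').2 + (j - i)))
      ⟨h1, hpos, rfl⟩ ⟨h1', hpos', heq.symm⟩
    simp only [Prod.mk.injEq] at e1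
    obtain ⟨e11, e12⟩ := e1
    have hk : (f m hm).2 = (f m' hm').2 := by omega
    rw [← h3, ← h3', ← e11, ← hk]

theorem stmt17 (h : ℕ → ℤ) (d : ℕ) (hp : IsPureOSeq h)
    (htop : ∀ j : ℕ, d < j → h j = 0) (hd : h d ≠ 0) :
    (∀ i j : ℕ, i ≤ j → j ≤ d / 2 → h i ≤ h j) ∧
    (∀ i : ℕ, i ≤ d / 2 → h i ≤ h (d - i)) := by
  classical
  obtain ⟨O, hOfin, hOne, hOideal, ⟨D, hD⟩, hcount⟩ := hp
  set F : Finset (ℕ →₀ ℕ) := hOfin.toFinset with hF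
  have hmemF : ∀ x, x ∈ F ↔ x ∈ O := fun x => Set.Finite.mem_toFinset hOfin
  have hcard : ∀ i : ℕ, h i = ((F.filter (fun m => mdeg m = i)).card : ℤ) := by
    intro i
    rw [hcount i]
    congr 1
    rw [← Set.ncard_coe_finset]
    congr 1
    ext x
    simp only [Finset.coe_filter, Set.mem_setOf_eq, hmemF]
  have hbound : ∀ n ∈ O, mdeg n ≤ d := by
    intro n hn
    by_contra hgt
    have h0 := htop (mdeg n) (by omega)
    rw [hcount (mdeg n)] at h0
    have hfin : ({m ∈ O | mdeg m = mdeg n}).Finite := hOfin.subset (fun x hx => hx.1)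
    have : ({m ∈ O | mdeg m = mdeg n}) = ∅ := by
      rw [← Set.ncard_eq_zero hfin]
      exact_mod_cast h0
    have hmem : n ∈ ({m ∈ O | mdeg m = mdeg n}) := ⟨hn, rfl⟩
    rw [this] at hmem
    exact hmem
  have hexd : ∃ m₀ ∈ O, mdeg m₀ = d := by
    by_contra hno
    push_neg at hno
    apply hd
    rw [hcount d]
    have : ({m ∈ O | mdeg m = d}) = ∅ := by
      ext x
      simp only [Set.mem_setOf_eq, Set.mem_empty_iff_false, iff_false, not_and]
      exact hno x
    rw [this]
    simp
  obtain ⟨m₀, hm₀O, hm₀d⟩ := hexd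
  have hm₀max : ∀ n ∈ O, m₀ ≤ n → n = m₀ := by
    intro n hn hle
    exact (eq_of_le_of_mdeg_le hle (by rw [hm₀d]; exact hbound n hn)).symm
  have hDd : D = d := by rw [← hD m₀ hm₀O hm₀max, hm₀d]
  -- maximal elements
  set Mx : Finset (ℕ →₀ ℕ) := F.filter (fun M' => ∀ n ∈ F, M' ≤ n → n = M') with hMx
  have hMxdeg : ∀ M' ∈ Mx, mdeg M' = d := by
    intro M' hM'
    rw [Finset.mem_filter] at hM'
    rw [← hDd]
    exact hD M' ((hmemF M').mp hM'.1) (fun n hn hle => hM'.2 n ((hmemF n).mpr hn) hle)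
  have hexmax : ∀ m ∈ F, ∃ M' ∈ Mx, m ≤ M' := by
    intro m hm
    have hne : (F.filter (fun n => m ≤ n)).Nonempty := ⟨m, Finset.mem_filter.mpr ⟨hm, le_rfl⟩⟩
    obtain ⟨M', hM'mem, hM'max⟩ := Finset.exists_max_image (F.filter (fun n => m ≤ n)) mdeg hne
    rw [Finset.mem_filter] at hM'mem
    refine ⟨M', Finset.mem_filter.mpr ⟨hM'mem.1, ?_⟩, hM'mem.2⟩
    intro n hn hle
    exact (eq_of_le_of_mdeg_le hle
      (hM'max n (Finset.mem_filter.mpr ⟨hn, le_trans hM'mem.2 hle⟩))).symm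
  -- the weight function
  set c : (ℕ →₀ ℕ) → ℕ := fun n => (Mx.filter (fun M' => n ≤ M')).card with hc
  have hcpos : ∀ n ∈ F, 0 < c n := by
    intro n hn
    obtain ⟨M', hM', hle⟩ := hexmax n hn
    exact Finset.card_pos.mpr ⟨M', Finset.mem_filter.mpr ⟨hM', hle⟩⟩
  have hsplit : ∀ (P : Finset (ℕ →₀ ℕ)) (w : (ℕ →₀ ℕ) → ℚ),
      (∑ r ∈ (P ×ˢ Mx).filter (fun r => r.1 ≤ r.2), w r.1) = ∑ n ∈ P, (c n : ℚ) * w n := by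
    intro P w
    rw [Finset.sum_filter, Finset.sum_product]
    refine Finset.sum_congr rfl fun n _ => ?_
    rw [← Finset.sum_filter]
    show ∑ _a ∈ Finset.filter (fun a => n ≤ a) Mx, w n = ↑(c n) * w n
    rw [Finset.sum_const, nsmul_eq_mul]
  -- main inequality
  have main : ∀ i j : ℕ, i ≤ j → i + j ≤ d → h i ≤ h j := by
    intro i j hij hijd
    have hνex : ∀ M' ∈ Mx, ∃ ν : (ℕ →₀ ℕ) → (ℕ →₀ ℕ),
        (∀ m, m ≤ M' → mdeg m = i → ν m ≤ M' ∧ mdeg (ν m) = j ∧ m ≤ ν m) ∧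
        ∀ m m', m ≤ M' → mdeg m = i → m' ≤ M' → mdeg m' = i → ν m = ν m' → m = m' := by
      intro M' hM'
      exact exists_inj M' hij (by rw [hMxdeg M' hM']; exact hijd)
    choose! ν hν1 hν2 using hνex
    set A : Finset (ℕ →₀ ℕ) := F.filter (fun m => mdeg m = i) with hA
    set B : Finset (ℕ →₀ ℕ) := F.filter (fun m => mdeg m = j) with hB
    set S := (A ×ˢ Mx).filter (fun r => r.1 ≤ r.2) with hS
    set T := (B ×ˢ Mx).filter (fun r => r.1 ≤ r.2) with hT
    have hSmem : ∀ r ∈ S, r.1 ∈ F ∧ mdeg r.1 = i ∧ r.2 ∈ Mx ∧ r.1 ≤ r.2 := by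
      intro r hr
      rw [hS, Finset.mem_filter, Finset.mem_product, hA, Finset.mem_filter] at hr
      exact ⟨hr.1.1.1, hr.1.1.2, hr.1.2, hr.2⟩
    set φ : (ℕ →₀ ℕ) × (ℕ →₀ ℕ) → (ℕ →₀ ℕ) × (ℕ →₀ ℕ) := fun r => (ν r.2 r.1, r.2) with hφ
    have hφT : ∀ r ∈ S, φ r ∈ T := by
      intro r hr
      obtain ⟨h1, h2, h3, h4⟩ := hSmem r hr
      obtain ⟨ha1, ha2, ha3⟩ := hν1 r.2 h3 r.1 h4 h2
      rw [hT, Finset.mem_filter, Finset.mem_product, hB, Finset.mem_filter]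
      refine ⟨⟨⟨?_, ha2⟩, h3⟩, ha1⟩
      · rw [hmemF]
        refine hOideal r.2 ?_ _ ha1
        rw [hMx, Finset.mem_filter] at h3
        exact (hmemF r.2).mp h3.1
    have hφinj : Set.InjOn φ S := by
      intro r hr r' hr' heq
      obtain ⟨r1, r2⟩ := r
      obtain ⟨r1', r2'⟩ := r'
      obtain ⟨h1, h2, h3, h4⟩ := hSmem _ hr
      obtain ⟨h1', h2', h3', h4'⟩ := hSmem _ hr'
      simp only [hφ, Prod.mk.injEq] at heq
      obtain ⟨e1, e2⟩ := heq
      subst e2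
      exact Prod.ext (hν2 r2 h3 r1 r1' h4 h2 h4' h2' e1) rfl
    have hcν : ∀ r ∈ S, (1 : ℚ) / c r.1 ≤ 1 / c (φ r).1 := by
      intro r hr
      obtain ⟨h1, h2, h3, h4⟩ := hSmem r hr
      obtain ⟨ha1, ha2, ha3⟩ := hν1 r.2 h3 r.1 h4 h2
      have hsub : Mx.filter (fun M' => ν r.2 r.1 ≤ M') ⊆ Mx.filter (fun M' => r.1 ≤ M') := by
        intro x hx
        rw [Finset.mem_filter] at hx ⊢
        exact ⟨hx.1, le_trans ha3 hx.2⟩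
      have hles : c (ν r.2 r.1) ≤ c r.1 := Finset.card_le_card hsub
      have hpos : 0 < c (ν r.2 r.1) := by
        apply hcpos
        rw [hmemF]
        refine hOideal r.2 ?_ _ ha1
        rw [hMx, Finset.mem_filter] at h3
        exact (hmemF r.2).mp h3.1
      rw [hφ]
      apply one_div_le_one_div_of_le
      · exact_mod_cast hpos
      · exact_mod_cast hles
    have hkey : (A.card : ℚ) ≤ (B.card : ℚ) := by
      have hone : ∀ n, n ∈ F → (c n : ℚ) * (1 / c n) = 1 := by
        intro n hn
        have hpn : (0 : ℚ) < c n := by exact_mod_cast hcpos n hn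
        rw [mul_one_div, div_self (ne_of_gt hpn)]
      have hAF : ∀ n ∈ A, n ∈ F := by
        intro n hn
        rw [hA, Finset.mem_filter] at hn
        exact hn.1
      have hBF : ∀ n ∈ B, n ∈ F := by
        intro n hn
        rw [hB, Finset.mem_filter] at hn
        exact hn.1
      have e1 : (A.card : ℚ) = ∑ n ∈ A, (c n : ℚ) * (1 / c n) := by
        rw [Finset.sum_congr rfl (fun n hn => hone n (hAF n hn)), Finset.sum_const,
          nsmul_eq_mul, mul_one]
      have e2 : (B.card : ℚ) = ∑ n ∈ B, (c n : ℚ) * (1 / c n) := by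
        rw [Finset.sum_congr rfl (fun n hn => hone n (hBF n hn)), Finset.sum_const,
          nsmul_eq_mul, mul_one]
      rw [e1, e2, ← hsplit A (fun n => 1 / c n), ← hsplit B (fun n => 1 / c n)]
      calc (∑ r ∈ S, (1 : ℚ) / c r.1)
          ≤ ∑ r ∈ S, (1 : ℚ) / c (φ r).1 := Finset.sum_le_sum hcν
        _ = ∑ r ∈ S.image φ, (1 : ℚ) / c r.1 := by
            rw [Finset.sum_image]
            intro x hx y hy hxy
            exact hφinj (Finset.mem_coe.mpr hx) (Finset.mem_coe.mpr hy) hxy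
        _ ≤ ∑ r ∈ T, (1 : ℚ) / c r.1 := by
            apply Finset.sum_le_sum_of_subset_of_nonneg
            · intro x hx
              obtain ⟨r, hr, rfl⟩ := Finset.mem_image.mp hx
              exact hφT r hr
            · intro x _ _
              exact div_nonneg zero_le_one (Nat.cast_nonneg _)
    rw [hcard i, hcard j]
    exact_mod_cast hkey
  constructor
  · intro i j hij hjd
    exact main i j hij (by omega)
  · intro i hid
    exact main i (d - i) (by omega) (by omega)
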